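/- For any finite connected simple graph G not isomorphic to K2, there exists a natural number n such that the n-fold iterate (ρ∘λ)^n(G) is a connected graph having no leaves and no pair of distinct sibling vertices; in particular, the reduction of G is well defined and is a connected graph without leaves and without siblings. -/

import Mathlib

open SimpleGraph

universe u

/-- The closed neighborhood of a vertex. -/
def closedNbhd {V : Type u} (G : SimpleGraph V) (v : V) : Set V :=
  insert v (G.neighborSet v)

/-- Two vertices are siblings if they share the same closed neighborhood. -/
def Sibling {V : Type u} (G : SimpleGraph V) (u v : V) : Prop :=
  closedNbhd G u = closedNbhd G v

/-- A leaf is a vertex of degree one. -/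
def IsLeaf {V : Type u} (G : SimpleGraph V) (v : V) : Prop :=
  Nat.card (G.neighborSet v) = 1

/-- The tuft number: the maximal number of leaves adjacent to a single vertex. -/
noncomputable def tuftNumber {V : Type u} (G : SimpleGraph V) : ℕ :=
  ⨆ v : V, Nat.card {u | IsLeaf G u ∧ G.Adj v u}

/-- The sibling number: the maximum over vertices `v` of the number of vertices sharing
the closed neighborhood of `v`, minus one. -/
noncomputable def siblingNumber {V : Type u} (G : SimpleGraph V) : ℕ :=
  ⨆ v : V, (Nat.card {u | Sibling G u v} - 1)

/-- The complete graph on two vertices. -/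
def K2 : SimpleGraph (Fin 2) := ⊤

/-- The sibling relation as a setoid. -/
def siblingSetoid {V : Type u} (G : SimpleGraph V) : Setoid V :=
  ⟨Sibling G, ⟨fun _ => rfl, fun {_ _} h => Eq.symm h, fun {_ _ _} h h' => Eq.trans h h'⟩⟩

/-- `rho G` is the quotient of `G` by the sibling relation: vertices are sibling
equivalence classes, two distinct classes being adjacent iff some pair of
representatives is adjacent. -/
def rho {V : Type u} (G : SimpleGraph V) : SimpleGraph (Quotient (siblingSetoid G)) where
  Adj A B := A ≠ B ∧ ∃ u v : V, Quotient.mk (siblingSetoid G) u = A ∧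
      Quotient.mk (siblingSetoid G) v = B ∧ G.Adj u v
  symm := ⟨by
    rintro A B ⟨hne, u, v, hu, hv, h⟩
    exact ⟨hne.symm, v, u, hv, hu, h.symm⟩⟩
  loopless := ⟨by
    rintro A ⟨hne, -⟩
    exact hne rfl⟩

/-- `lamS G S` is the induced subgraph on the complement of `S`. -/
def lamS {V : Type u} (G : SimpleGraph V) (S : Set V) : SimpleGraph ↥(Sᶜ) :=
  SimpleGraph.induce Sᶜ G

/-- `lam G` is the induced subgraph on the set of non-leaf vertices. -/
def lam {V : Type u} (G : SimpleGraph V) : SimpleGraph ↥{v : V | ¬ IsLeaf G v} :=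
  SimpleGraph.induce {v : V | ¬ IsLeaf G v} G

/-- A finite graph, bundled with its vertex type. -/
structure FinGraph : Type (u + 1) where
  V : Type u
  [finite : Finite V]
  G : SimpleGraph V

attribute [instance] FinGraph.finite

/-- One reduction step: remove all leaves, then contract each sibling class to a point. -/
def redStep (X : FinGraph.{u}) : FinGraph.{u} :=
  ⟨Quotient (siblingSetoid (lam X.G)), rho (lam X.G)⟩

/-- The reduction of a finite graph: iterate `redStep` until it stabilizes (up to
isomorphism this happens after at most `Nat.card X.V` steps). -/
noncomputable def reduction (X : FinGraph.{u}) : FinGraph.{u} :=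
  redStep^[Nat.card X.V] X

/-- `G` contains an induced cycle on `n` vertices. -/
def HasInducedCycle {V : Type u} (G : SimpleGraph V) (n : ℕ) : Prop :=
  ∃ s : Set V, Nonempty (SimpleGraph.induce s G ≃g cycleGraph n)

/-- A graph is chordal if it has no induced cycle on four or more vertices. -/
def Chordal {V : Type u} (G : SimpleGraph V) : Prop :=
  ∀ m : ℕ, 4 ≤ m → ¬ HasInducedCycle G m

/-- The setoid identifying isomorphic graphs on `Fin n` satisfying a property `P`. -/
def graphSetoid (n : ℕ) (P : SimpleGraph (Fin n) → Prop) :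
    Setoid {G : SimpleGraph (Fin n) // P G} :=
  ⟨fun G H => Nonempty (G.1 ≃g H.1),
    ⟨fun _ => ⟨Iso.refl⟩, fun ⟨e⟩ => ⟨e.symm⟩, fun ⟨e⟩ ⟨f⟩ => ⟨e.trans f⟩⟩⟩

/-- The number of isomorphism classes of graphs on `n` vertices satisfying `P`. -/
noncomputable def numClasses (n : ℕ) (P : SimpleGraph (Fin n) → Prop) : ℕ :=
  Nat.card (Quotient (graphSetoid n P))


section ReductionProof

open Function

variable {V : Type u} {W : Type*}

lemma mem_closedNbhd_iff {G : SimpleGraph V} {u v : V} :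
    u ∈ closedNbhd G v ↔ u = v ∨ G.Adj v u := by
  simp [closedNbhd]

lemma self_mem_closedNbhd (G : SimpleGraph V) (v : V) : v ∈ closedNbhd G v :=
  Set.mem_insert _ _

lemma adj_mem_closedNbhd {G : SimpleGraph V} {u v : V} (h : G.Adj v u) :
    u ∈ closedNbhd G v := Set.mem_insert_of_mem _ h

/-- Goodness: connected, leafless, sibling-free. -/
def GoodG {V : Type u} (G : SimpleGraph V) : Prop :=
  G.Connected ∧ (∀ v, ¬ IsLeaf G v) ∧ (∀ u v, Sibling G u v → u = v)

lemma image_closedNbhd {G : SimpleGraph V} {H : SimpleGraph W} (e : G ≃g H) (u : V) :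
    e '' closedNbhd G u = closedNbhd H (e u) := by
  ext x
  constructor
  · rintro ⟨y, hy, rfl⟩
    rcases mem_closedNbhd_iff.1 hy with rfl | hadj
    · exact self_mem_closedNbhd _ _
    · exact adj_mem_closedNbhd (e.map_adj_iff.mpr hadj)
  · intro hx
    rcases mem_closedNbhd_iff.1 hx with rfl | hadj
    · exact ⟨u, self_mem_closedNbhd _ _, rfl⟩
    · refine ⟨e.symm x, ?_, e.apply_symm_apply x⟩
      rw [← e.apply_symm_apply x] at hadj
      exact adj_mem_closedNbhd (e.map_adj_iff.mp hadj)

lemma sibling_map {G : SimpleGraph V} {H : SimpleGraph W} (e : G ≃g H) {u v : V}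
    (h : Sibling G u v) : Sibling H (e u) (e v) := by
  unfold Sibling
  rw [← image_closedNbhd e u, ← image_closedNbhd e v, h]

lemma isLeaf_map {G : SimpleGraph V} {H : SimpleGraph W} (e : G ≃g H) {v : V}
    (h : IsLeaf G v) : IsLeaf H (e v) := by
  unfold IsLeaf at h ⊢
  rw [← Nat.card_congr (e.mapNeighborSet v)]
  exact h

lemma goodG_of_iso {G : SimpleGraph V} {H : SimpleGraph W} (e : G ≃g H)
    (hg : GoodG G) : GoodG H := by
  obtain ⟨hc, hnl, hns⟩ := hg
  refine ⟨e.connected_iff.mp hc, ?_, ?_⟩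
  · intro v hv
    have := isLeaf_map e.symm hv
    exact hnl _ this
  · intro u v huv
    have := sibling_map e.symm huv
    have h2 := hns _ _ this
    have := congrArg e h2
    simpa using this

/-- A leaf has a unique neighbor. -/
lemma leaf_neighborSet_eq {G : SimpleGraph V} {v w : V} (hv : IsLeaf G v)
    (h : G.Adj v w) : G.neighborSet v = {w} := by
  obtain ⟨a, ha⟩ := Set.ncard_eq_one.mp (by rw [← Nat.card_coe_set_eq]; exact hv)
  have hw : w ∈ G.neighborSet v := h
  rw [ha] at hw ⊢
  rw [Set.mem_singleton_iff.mp hw]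

lemma K2_of_adj_leaves {G : SimpleGraph V} (hc : G.Connected) {v w : V}
    (hadj : G.Adj v w) (hv : IsLeaf G v) (hw : IsLeaf G w) : Nonempty (G ≃g K2) := by
  have hvw : v ≠ w := hadj.ne
  have hnv : G.neighborSet v = {w} := leaf_neighborSet_eq hv hadj
  have hnw : G.neighborSet w = {v} := leaf_neighborSet_eq hw hadj.symm
  have hclosed : ∀ (x y : V), G.Walk x y → x ∈ ({v, w} : Set V) → y ∈ ({v, w} : Set V) := by
    intro x y p
    induction p with
    | nil => exact id
    | @cons a b c h q ih =>
      intro ha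
      apply ih
      rcases ha with rfl | ha
      · have : b ∈ G.neighborSet a := h
        rw [hnv] at this
        right; exact this
      · rw [Set.mem_singleton_iff.mp ha] at h
        have : b ∈ G.neighborSet w := h
        rw [hnw] at this
        left; exact this
  have hall : ∀ x : V, x = v ∨ x = w := by
    intro x
    have := hclosed v x ((hc.preconnected v x).some) (Or.inl rfl)
    simpa using this
  classical
  have h2 : ∀ j : Fin 2, j = 0 ∨ j = 1 := by decide
  refine ⟨⟨⟨fun x => if x = v then 0 else 1, fun i => if i = 0 then v else w, ?_, ?_⟩, ?_⟩⟩
  · intro x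
    rcases hall x with rfl | rfl <;> simp [hvw.symm]
  · intro i
    rcases h2 i with rfl | rfl <;> simp [hvw.symm]
  · intro a b
    simp only [Equiv.coe_fn_mk, K2, SimpleGraph.top_adj]
    rcases hall a with rfl | rfl <;> rcases hall b with rfl | rfl <;>
      simp [hvw, hvw.symm, hadj, hadj.symm, SimpleGraph.irrefl]

lemma exists_nonleaf {G : SimpleGraph V} (hc : G.Connected)
    (hK2 : ¬ Nonempty (G ≃g K2)) : ∃ v, ¬ IsLeaf G v := by
  by_contra hno
  push_neg at hno
  obtain ⟨v⟩ := hc.nonempty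
  have hv := hno v
  obtain ⟨w, hw⟩ : ∃ w, w ∈ G.neighborSet v := by
    by_contra hempty
    push_neg at hempty
    have : G.neighborSet v = ∅ := Set.eq_empty_iff_forall_notMem.mpr hempty
    rw [IsLeaf, this] at hv
    simp at hv
  exact hK2 (K2_of_adj_leaves hc hw (hno v) (hno w))

lemma lam_adj {G : SimpleGraph V} {a b : ↥{v : V | ¬ IsLeaf G v}} :
    (lam G).Adj a b ↔ G.Adj a.1 b.1 := Iff.rfl

lemma closedNbhd_lam {G : SimpleGraph V} (c : ↥{v : V | ¬ IsLeaf G v}) :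
    closedNbhd (lam G) c = Subtype.val ⁻¹' closedNbhd G c.1 := by
  ext x
  simp only [closedNbhd, Set.mem_preimage, Set.mem_insert_iff, SimpleGraph.mem_neighborSet,
    lam_adj, Subtype.ext_iff]

lemma sibling_lam {G : SimpleGraph V} {a b : ↥{v : V | ¬ IsLeaf G v}}
    (h : Sibling G a.1 b.1) : Sibling (lam G) a b := by
  unfold Sibling
  rw [closedNbhd_lam, closedNbhd_lam, h]

lemma lam_reachable [Finite V] {G : SimpleGraph V} :
    ∀ (n : ℕ) (u v : V) (hu : ¬ IsLeaf G u) (hv : ¬ IsLeaf G v) (p : G.Walk u v),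
      p.length ≤ n → (lam G).Reachable ⟨u, hu⟩ ⟨v, hv⟩ := by
  intro n
  induction n with
  | zero =>
    intro u v hu hv p hp
    cases p with
    | nil => exact Reachable.refl _
    | cons h q => simp [SimpleGraph.Walk.length_cons] at hp
  | succ n ih =>
    intro u v hu hv p hp
    cases p with
    | nil => exact Reachable.refl _
    | @cons _ b _ h q =>
      by_cases hb : IsLeaf G b
      · cases q with
        | nil => exact absurd hb hv
        | @cons _ c _ h' r =>
          have hnb : G.neighborSet b = {u} := leaf_neighborSet_eq hb h.symm
          have hcu : c = u := by
            have : c ∈ G.neighborSet b := h'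
            rw [hnb] at this
            exact this
          subst hcu
          apply ih _ v hu hv r
          simp only [SimpleGraph.Walk.length_cons] at hp
          omega
      · refine Reachable.trans (SimpleGraph.Adj.reachable (lam_adj.mpr h)) (ih b v hb hv q ?_)
        simp only [SimpleGraph.Walk.length_cons] at hp
        omega

lemma lam_connected [Finite V] {G : SimpleGraph V} (hc : G.Connected)
    (hK2 : ¬ Nonempty (G ≃g K2)) : (lam G).Connected := by
  obtain ⟨v0, hv0⟩ := exists_nonleaf hc hK2
  haveI : Nonempty ↥{v : V | ¬ IsLeaf G v} := ⟨⟨v0, hv0⟩⟩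
  refine ⟨?_⟩
  rintro ⟨u, hu⟩ ⟨v, hv⟩
  obtain ⟨p⟩ := hc.preconnected u v
  exact lam_reachable p.length u v hu hv p le_rfl

lemma rho_connected {G : SimpleGraph V} (hc : G.Connected) : (rho G).Connected := by
  have key : ∀ (u v : V), G.Walk u v →
      (rho G).Reachable (Quotient.mk (siblingSetoid G) u) (Quotient.mk (siblingSetoid G) v) := by
    intro u v p
    induction p with
    | nil => exact Reachable.refl _
    | @cons a b c h q ih =>
      refine Reachable.trans ?_ ih
      by_cases he : (Quotient.mk (siblingSetoid G) a) = Quotient.mk (siblingSetoid G) b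
      · rw [he]
      · exact SimpleGraph.Adj.reachable ⟨he, a, b, rfl, rfl, h⟩
  haveI := hc.nonempty
  haveI : Nonempty (Quotient (siblingSetoid G)) :=
    Nonempty.map (Quotient.mk (siblingSetoid G)) ‹_›
  refine ⟨?_⟩
  intro A B
  obtain ⟨u, rfl⟩ := Quotient.exists_rep A
  obtain ⟨v, rfl⟩ := Quotient.exists_rep B
  obtain ⟨p⟩ := hc.preconnected u v
  exact key u v p

lemma rho_not_K2 {G : SimpleGraph V} : ¬ Nonempty (rho G ≃g K2) := by
  rintro ⟨e⟩
  have h01 : (rho G).Adj (e.symm 0) (e.symm 1) := by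
    apply e.symm.map_adj_iff.mpr
    simp [K2]
  obtain ⟨hne, a, b, ha, hb, hab⟩ := h01
  have hall : ∀ x : V, Sibling G x a ∨ Sibling G x b := by
    intro x
    have h2 : ∀ i : Fin 2, i = 0 ∨ i = 1 := by decide
    rcases h2 (e (Quotient.mk (siblingSetoid G) x)) with hx | hx
    · left
      have hxe : Quotient.mk (siblingSetoid G) x = e.symm 0 := by
        rw [← hx, RelIso.symm_apply_apply]
      rw [← ha] at hxe
      exact Quotient.exact hxe
    · right
      have hxe : Quotient.mk (siblingSetoid G) x = e.symm 1 := by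
        rw [← hx, RelIso.symm_apply_apply]
      rw [← hb] at hxe
      exact Quotient.exact hxe
  have aux : ∀ (c d : V), G.Adj c d → (∀ x, Sibling G x c ∨ Sibling G x d) →
      closedNbhd G c ⊆ closedNbhd G d := by
    intro c d hcd hcall x hx
    rcases hcall x with hs | hs
    · have hd : d ∈ closedNbhd G x := by
        rw [hs]; exact adj_mem_closedNbhd hcd
      rcases mem_closedNbhd_iff.1 hd with h | h
      · cases h; exact self_mem_closedNbhd _ _
      · exact adj_mem_closedNbhd h.symm
    · rw [← hs]; exact self_mem_closedNbhd G x
  have hsib : Sibling G a b :=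
    Set.Subset.antisymm (aux a b hab hall) (aux b a hab.symm fun x => (hall x).symm)
  apply hne
  rw [← ha, ← hb]
  exact Quotient.sound hsib

/-- Inclusion iso when there are no leaves. -/
def lamIso {G : SimpleGraph V} (h : ∀ v, ¬ IsLeaf G v) : lam G ≃g G where
  toEquiv := Equiv.subtypeUnivEquiv h
  map_rel_iff' := Iff.rfl

/-- Quotient iso when there are no siblings. -/
def rhoIso {G : SimpleGraph V} (h : ∀ u v, Sibling G u v → u = v) : G ≃g rho G where
  toEquiv :=
    { toFun := Quotient.mk (siblingSetoid G)
      invFun := Quotient.lift id fun a b hab => h a b hab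
      left_inv := fun v => rfl
      right_inv := fun q => Quotient.inductionOn q fun v => rfl }
  map_rel_iff' := by
    intro u v
    constructor
    · rintro ⟨hne, a, b, ha, hb, hab⟩
      have ha' : a = u := h a u (Quotient.exact ha)
      have hb' : b = v := h b v (Quotient.exact hb)
      rw [← ha', ← hb']; exact hab
    · intro hadj
      refine ⟨?_, u, v, rfl, rfl, hadj⟩
      intro hq
      exact hadj.ne (h u v (Quotient.exact hq))

lemma redStep_good (X : FinGraph.{u}) (hg : GoodG X.G) : GoodG (redStep X).G := by
  obtain ⟨hc, hnl, hns⟩ := hg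
  have e1 : lam X.G ≃g X.G := lamIso hnl
  have hns' : ∀ a b, Sibling (lam X.G) a b → a = b := by
    intro a b hab
    have := sibling_map e1 hab
    have h2 := hns _ _ this
    exact e1.injective (by exact h2)
  have e2 : lam X.G ≃g rho (lam X.G) := rhoIso hns'
  exact goodG_of_iso (e1.symm.trans e2) ⟨hc, hnl, hns⟩

lemma good_iterate (X : FinGraph.{u}) (hg : GoodG X.G) (m : ℕ) :
    GoodG (redStep^[m] X).G := by
  induction m with
  | zero => exact hg
  | succ n ih =>
    rw [Function.iterate_succ_apply']
    exact redStep_good _ ih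

lemma card_redStep_lt (X : FinGraph.{u}) (hc : X.G.Connected) (hg : ¬ GoodG X.G) :
    Nat.card (redStep X).V < Nat.card X.V := by
  have hsurj : Function.Surjective (Quotient.mk (siblingSetoid (lam X.G))) :=
    fun q => Quotient.exists_rep q
  have hquot : Nat.card (redStep X).V ≤ Nat.card ↥{v : X.V | ¬ IsLeaf X.G v} :=
    Nat.card_le_card_of_surjective _ hsurj
  by_cases hleaf : ∃ v, IsLeaf X.G v
  · obtain ⟨v, hv⟩ := hleaf
    have hS : Nat.card ↥{v : X.V | ¬ IsLeaf X.G v} < Nat.card X.V := by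
      rw [Nat.card_coe_set_eq, ← Set.ncard_univ]
      apply Set.ncard_lt_ncard _ Set.finite_univ
      constructor
      · exact Set.subset_univ _
      · intro hsub
        exact (hsub (Set.mem_univ v)) hv
    omega
  · push_neg at hleaf
    obtain ⟨u, v, huv, hne⟩ : ∃ u v, Sibling X.G u v ∧ u ≠ v := by
      by_contra hnos
      push_neg at hnos
      exact hg ⟨hc, hleaf, hnos⟩
    have hSeq : Nat.card ↥{v : X.V | ¬ IsLeaf X.G v} = Nat.card X.V :=
      Nat.card_congr (Equiv.subtypeUnivEquiv hleaf)
    have hlt : Nat.card (redStep X).V < Nat.card ↥{v : X.V | ¬ IsLeaf X.G v} := by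
      letI : Fintype X.V := Fintype.ofFinite X.V
      letI : Fintype ↥{v : X.V | ¬ IsLeaf X.G v} := Fintype.ofFinite _
      haveI : Finite (Quotient (siblingSetoid (lam X.G))) := Finite.of_surjective _ hsurj
      letI : Fintype (Quotient (siblingSetoid (lam X.G))) := Fintype.ofFinite _
      show Nat.card (Quotient (siblingSetoid (lam X.G))) < _
      rw [Nat.card_eq_fintype_card, Nat.card_eq_fintype_card]
      apply Fintype.card_lt_of_surjective_not_injective _ hsurj
      intro hinj
      have h1 : Quotient.mk (siblingSetoid (lam X.G)) ⟨u, hleaf u⟩ =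
          Quotient.mk (siblingSetoid (lam X.G)) ⟨v, hleaf v⟩ :=
        Quotient.sound (sibling_lam huv)
      have := hinj h1
      exact hne (congrArg Subtype.val this)
    omega

lemma main_ind : ∀ (k : ℕ) (X : FinGraph.{u}), X.G.Connected →
    ¬ Nonempty (X.G ≃g K2) → Nat.card X.V ≤ k → GoodG (redStep^[k] X).G := by
  intro k
  induction k with
  | zero =>
    intro X hc hK hcard
    haveI := hc.nonempty
    have : 0 < Nat.card X.V := Nat.card_pos
    omega
  | succ n ih =>
    intro X hc hK hcard
    by_cases hg : GoodG X.G
    · exact good_iterate X hg _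
    · have hc' : (redStep X).G.Connected := rho_connected (lam_connected hc hK)
      have hK' : ¬ Nonempty ((redStep X).G ≃g K2) := rho_not_K2
      have hlt := card_redStep_lt X hc hg
      rw [Function.iterate_succ_apply]
      exact ih (redStep X) hc' hK' (by omega)

end ReductionProof

/-- For a connected graph `G` other than `K2`, some iterate of `ρ ∘ λ` is a connected
graph without leaves and without distinct siblings; in particular the reduction of `G`
is such a graph. -/
theorem reduction_reduced {V : Type} [Fintype V] (G : SimpleGraph V)
    (hc : G.Connected) (hK2 : ¬ Nonempty (G ≃g K2)) :
    (∃ n : ℕ,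
      (redStep^[n] ⟨V, G⟩).G.Connected ∧
      (∀ v, ¬ IsLeaf (redStep^[n] ⟨V, G⟩).G v) ∧
      (∀ u v, Sibling (redStep^[n] ⟨V, G⟩).G u v → u = v)) ∧
    (reduction ⟨V, G⟩).G.Connected ∧
    (∀ v, ¬ IsLeaf (reduction ⟨V, G⟩).G v) ∧
    (∀ u v, Sibling (reduction ⟨V, G⟩).G u v → u = v) := by
  have key : ∀ n : ℕ, Nat.card V ≤ n → GoodG ((redStep^[n] (⟨V, G⟩ : FinGraph)).G) := by
    intro n hn
    exact main_ind n ⟨V, G⟩ hc hK2 hn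
  have h1 := key (Nat.card V) le_rfl
  have h2 : (reduction (⟨V, G⟩ : FinGraph)) = redStep^[Nat.card V] ⟨V, G⟩ := rfl
  refine ⟨⟨Nat.card V, h1.1, h1.2.1, h1.2.2⟩, ?_⟩
  rw [h2]
  exact ⟨h1.1, h1.2.1, h1.2.2⟩
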